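/- arXiv:1609.04441 — 2 statements merged into one kernel-verified Lean document; each statement's English description precedes it below -/
import Mathlib

section
/- Let s ∈ (0,1), γ > 0, and let N ≥ 2 be an integer. Then the ODE system ẋ_i = γ Σ_{j≠i} ζ_i ζ_j (x_i − x_j)/(2s|x_i − x_j|^{1+2s}), i = 1,…,N, does not admit stationary points: there exist no ζ_1,…,ζ_N ∈ {−1,1} and no real numbers x_1 < x_2 < … < x_N such that Σ_{j≠i} ζ_i ζ_j (x_i − x_j)/(2s|x_i − x_j|^{1+2s}) = 0 for every i = 1,…,N. -/
open Real Filter Finset Topology NNReal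
open scoped ENNReal

noncomputable section

/-- The fractional Laplacian `I_s` of order `2s` (up to a normalizing constant). -/
def fracLap (s : ℝ) (φ : ℝ → ℝ) (x : ℝ) : ℝ :=
  (1 / 2) * ∫ y : ℝ, (φ (x + y) + φ (x - y) - 2 * φ x) / |y| ^ (1 + 2 * s)

/-- `W` is a `C^{3,α}` periodic multi-well potential with nondegenerate minima at the integers. -/
structure IsMultiWell (W : ℝ → ℝ) : Prop where
  smooth : ContDiff ℝ 3 W
  holder : ∃ α : ℝ≥0, 0 < α ∧ (α : ℝ) < 1 ∧ ∃ C : ℝ≥0, HolderWith C α (iteratedDeriv 3 W)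
  periodic : ∀ v : ℝ, W (v + 1) = W v
  zero_int : ∀ k : ℤ, W (k : ℝ) = 0
  pos_off_int : ∀ v : ℝ, (∀ k : ℤ, v ≠ (k : ℝ)) → 0 < W v
  nondeg : 0 < iteratedDeriv 2 W 0

/-- Regularity and boundedness assumptions on the external stress `σ = σ(t,x)`. -/
structure SigmaAssumption (s : ℝ) (σ : ℝ → ℝ → ℝ) : Prop where
  buc : UniformContinuousOn (Function.uncurry σ) (Set.Ici 0 ×ˢ Set.univ)
  bdd : ∃ B : ℝ, ∀ t x : ℝ, 0 ≤ t → |σ t x| ≤ B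
  reg : ∃ M : ℝ, 0 < M ∧ ∃ α : ℝ, s < α ∧ α < 1 ∧
    (∀ t x : ℝ, 0 ≤ t → |deriv (σ t) x| ≤ M) ∧
    (∀ t x : ℝ, 0 ≤ t → |deriv (fun τ => σ τ x) t| ≤ M) ∧
    (∀ t x h : ℝ, 0 ≤ t → |deriv (σ t) (x + h) - deriv (σ t) x| ≤ M * |h| ^ α)

/-- The basic layer solution (heteroclinic) associated with `I_s` and `W`. -/
structure IsLayerSolution (s : ℝ) (W : ℝ → ℝ) (u : ℝ → ℝ) : Prop where
  smooth : ContDiff ℝ 2 u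
  eqn : ∀ x : ℝ, fracLap s u x = deriv W (u x)
  mono : ∀ x : ℝ, 0 < deriv u x
  lim_bot : Tendsto u atBot (nhds 0)
  lim_top : Tendsto u atTop (nhds 1)
  half : u 0 = 1 / 2

/-- `γ := (∫ (u')²)⁻¹`. -/
def layerGamma (u : ℝ → ℝ) : ℝ := (∫ x : ℝ, (deriv u x) ^ 2)⁻¹

/-- Bounded solution of the parabolic Peierls–Nabarro equation
`ε ∂_t v = I_s v - ε^{-2s} W'(v) + σ` with initial datum `v0`. -/
structure IsDislocationSol (s : ℝ) (W : ℝ → ℝ) (σ : ℝ → ℝ → ℝ) (ε : ℝ)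
    (v : ℝ → ℝ → ℝ) (v0 : ℝ → ℝ) : Prop where
  init : ∀ x : ℝ, v 0 x = v0 x
  bdd : ∃ B : ℝ, ∀ t x : ℝ, |v t x| ≤ B
  eqn : ∀ t : ℝ, 0 < t → ∀ x : ℝ,
    HasDerivAt (fun τ => v τ x)
      ((fracLap s (v t) x - (1 / ε ^ (2 * s)) * deriv W (v t x) + σ t x) / ε) t

/-- Right-hand side of the particle system, with stress `σ` and constant extra forcing `δ`. -/
def odeRHS (s γ : ℝ) (N : ℕ) (σ : ℝ → ℝ → ℝ) (ζ : ℕ → ℝ) (δ : ℝ)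
    (x : ℕ → ℝ → ℝ) (i : ℕ) (t : ℝ) : ℝ :=
  γ * ((∑ j ∈ (Finset.Icc 1 N).erase i,
      ζ i * ζ j * (x i t - x j t) / (2 * s * |x i t - x j t| ^ (1 + 2 * s)))
    - ζ i * σ t (x i t) - ζ i * δ)

/-- Solution of the particle system on `[0, T]`, with ordered particles on `[0, T)`. -/
structure IsODEFlowOn (s γ : ℝ) (N : ℕ) (σ : ℝ → ℝ → ℝ) (ζ : ℕ → ℝ) (δ : ℝ)
    (y0 : ℕ → ℝ) (x : ℕ → ℝ → ℝ) (T : ℝ) : Prop where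
  init : ∀ i ∈ Finset.Icc 1 N, x i 0 = y0 i
  cont : ∀ i ∈ Finset.Icc 1 N, ContinuousOn (x i) (Set.Icc 0 T)
  derivEq : ∀ i ∈ Finset.Icc 1 N, ∀ t ∈ Set.Ioo (0 : ℝ) T,
    HasDerivAt (x i) (odeRHS s γ N σ ζ δ x i t) t
  sep : ∀ i : ℕ, 1 ≤ i → i < N → ∀ t ∈ Set.Ico (0 : ℝ) T, x i t < x (i + 1) t

/-- Two consecutive particles touch at time `T`. -/
def HasCollisionAt (N : ℕ) (x : ℕ → ℝ → ℝ) (T : ℝ) : Prop :=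
  ∃ i0 : ℕ, 1 ≤ i0 ∧ i0 < N ∧ x i0 T = x (i0 + 1) T

/-- Solution of the particle system up to its (possibly infinite) collision time `Tc`. -/
structure IsODEFlow (s γ : ℝ) (N : ℕ) (σ : ℝ → ℝ → ℝ) (ζ : ℕ → ℝ) (δ : ℝ)
    (y0 : ℕ → ℝ) (x : ℕ → ℝ → ℝ) (Tc : ℝ≥0∞) : Prop where
  pos : 0 < Tc
  init : ∀ i ∈ Finset.Icc 1 N, x i 0 = y0 i
  derivEq : ∀ i ∈ Finset.Icc 1 N, ∀ t : ℝ, 0 < t → ENNReal.ofReal t < Tc →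
    HasDerivAt (x i) (odeRHS s γ N σ ζ δ x i t) t
  sep : ∀ i : ℕ, 1 ≤ i → i < N → ∀ t : ℝ, 0 ≤ t → ENNReal.ofReal t < Tc →
    x i t < x (i + 1) t
  coll : Tc ≠ ⊤ → (∀ i ∈ Finset.Icc 1 N, ContinuousOn (x i) (Set.Icc 0 Tc.toReal)) ∧
    HasCollisionAt N x Tc.toReal

/-- Segregate orientation: the first `K` layers are positive, the last `N - K` negative. -/
def Segregate (ζ : ℕ → ℝ) (K N : ℕ) : Prop :=
  (∀ i : ℕ, 1 ≤ i → i ≤ K → ζ i = 1) ∧ (∀ i : ℕ, K < i → i ≤ N → ζ i = -1)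

/-- The initial dislocation datum `v_ε^0`. -/
def initialDatum (s β : ℝ) (σ : ℝ → ℝ → ℝ) (u : ℝ → ℝ) (N K : ℕ) (ζ x0 : ℕ → ℝ)
    (ε x : ℝ) : ℝ :=
  ε ^ (2 * s) / β * σ 0 x + (∑ i ∈ Finset.Icc 1 N, u (ζ i * (x - x0 i) / ε))
    - ((N : ℝ) - (K : ℝ))

/-- The Heaviside function. -/
def heaviside (x : ℝ) : ℝ := if 0 < x then 1 else 0

/-- `η := (∫ (u')²) / W''(0)`. -/
def layerEta (W u : ℝ → ℝ) : ℝ := (∫ x : ℝ, (deriv u x) ^ 2) / iteratedDeriv 2 W 0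

/-- The corrector `ψ`, i.e. the bounded solution of
`I_s ψ - W''(u) ψ = u' + η (W''(u) - W''(0))` vanishing at infinity. -/
structure IsCorrector (s : ℝ) (W u ψ : ℝ → ℝ) : Prop where
  bdd : ∃ B : ℝ, ∀ x : ℝ, |ψ x| ≤ B
  eqn : ∀ x : ℝ, fracLap s ψ x - iteratedDeriv 2 W (u x) * ψ x
    = deriv u x + layerEta W u * (iteratedDeriv 2 W (u x) - iteratedDeriv 2 W 0)
  lim_bot : Tendsto ψ atBot (nhds 0)
  lim_top : Tendsto ψ atTop (nhds 0)

/-- The barrier `v̄_ε` built by superposing translated layers and correctors. -/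
def superBarrier (s β : ℝ) (σ : ℝ → ℝ → ℝ) (u ψ : ℝ → ℝ) (N K : ℕ) (ζ : ℕ → ℝ)
    (δ ε : ℝ) (xb : ℕ → ℝ → ℝ) (t x : ℝ) : ℝ :=
  ε ^ (2 * s) * ((σ t x + δ) / β)
    + (∑ i ∈ Finset.Icc 1 N, u (ζ i * (x - xb i t) / ε)) - ((N : ℝ) - (K : ℝ))
    - ∑ i ∈ Finset.Icc 1 N, ζ i * ε ^ (2 * s) * deriv (xb i) t * ψ (ζ i * (x - xb i t) / ε)



section NspHelpers

private lemma nsp_abel_le (c e : ℕ → ℝ) :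
    ∀ n : ℕ, (∀ m, 1 ≤ m → m ≤ n → (∑ j ∈ Ioc 0 m, c j) ≤ 0) →
    (∀ m, 1 ≤ m → m < n → e (m + 1) ≤ e m) →
    (∑ j ∈ Ioc 0 n, c j * e j) ≤ (∑ j ∈ Ioc 0 n, c j) * e n := by
  intro n
  induction n with
  | zero => intro _ _; simp
  | succ n ih =>
    intro hps he
    have h1 : (∑ j ∈ Ioc 0 (n + 1), c j * e j)
        = (∑ j ∈ Ioc 0 n, c j * e j) + c (n + 1) * e (n + 1) :=
      Finset.sum_Ioc_succ_top (Nat.zero_le n) _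
    have h2 : (∑ j ∈ Ioc 0 (n + 1), c j)
        = (∑ j ∈ Ioc 0 n, c j) + c (n + 1) :=
      Finset.sum_Ioc_succ_top (Nat.zero_le n) _
    have h3 : (∑ j ∈ Ioc 0 n, c j * e j) ≤ (∑ j ∈ Ioc 0 n, c j) * e n := by
      apply ih
      · intro m hm1 hm2; exact hps m hm1 (le_trans hm2 (Nat.le_succ n))
      · intro m hm1 hm2; exact he m hm1 (lt_trans hm2 (Nat.lt_succ_self n))
    have h4 : (∑ j ∈ Ioc 0 n, c j) * e n ≤ (∑ j ∈ Ioc 0 n, c j) * e (n + 1) := by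
      rcases Nat.eq_zero_or_pos n with h | h
      · simp [h]
      · exact mul_le_mul_of_nonpos_left (he n h (Nat.lt_succ_self n))
          (hps n h (Nat.le_succ n))
    rw [h1, h2]
    nlinarith [h3, h4]

private lemma nsp_shift (f : ℕ → ℝ) (k : ℕ) :
    ∀ p : ℕ, (∑ m ∈ Ioc 0 p, f (k + m)) = ∑ j ∈ Ioc k (k + p), f j := by
  intro p
  induction p with
  | zero => simp
  | succ p ih =>
    rw [Finset.sum_Ioc_succ_top (Nat.zero_le p), ih, show k + (p + 1) = (k + p) + 1 from rfl,
      Finset.sum_Ioc_succ_top (Nat.le_add_right k p)]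

private lemma nsp_reflect (f : ℕ → ℝ) (k p : ℕ) (hp : p + 1 ≤ k) :
    (∑ m ∈ Ioc 0 p, f (k - m)) = ∑ j ∈ Ioc (k - 1 - p) (k - 1), f j := by
  apply Finset.sum_nbij' (fun m => k - m) (fun j => k - j)
  · intro a ha; rw [Finset.mem_Ioc] at *; omega
  · intro a ha; rw [Finset.mem_Ioc] at *; omega
  · intro a ha; rw [Finset.mem_Ioc] at ha; omega
  · intro a ha; rw [Finset.mem_Ioc] at ha; omega
  · intro a _; rfl

private lemma nsp_anti {t a b : ℝ} (ht : 0 ≤ t) (ha : 0 < a) (hab : a ≤ b) :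
    b ^ (-t) ≤ a ^ (-t) := by
  rw [Real.rpow_neg (le_trans ha.le hab), Real.rpow_neg ha.le]
  exact inv_anti₀ (Real.rpow_pos_of_pos ha t) (Real.rpow_le_rpow ha.le hab ht)

private lemma nsp_kill (s : ℝ) (hs : 0 < s) (N : ℕ) (ζ x : ℕ → ℝ)
    (hmono : ∀ i j : ℕ, 1 ≤ i → i < j → j ≤ N → x i < x j)
    (hkey : ∀ k : ℕ, 1 ≤ k → k ≤ N →
      (∑ j ∈ Ioc 0 (k - 1), ζ j * (x k - x j) ^ (-(2 * s)))
        = ∑ j ∈ Ioc k N, ζ j * (x j - x k) ^ (-(2 * s)))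
    (k : ℕ) (hk1 : 1 ≤ k) (hkN : k ≤ N)
    (hpre : ∀ j, j ≤ k - 1 → (∑ i ∈ Ioc 0 j, ζ i) ≤ ∑ i ∈ Ioc 0 (k - 1), ζ i)
    (hsuf : ∀ j, k ≤ j → j ≤ N → (∑ i ∈ Ioc 0 j, ζ i) ≤ ∑ i ∈ Ioc 0 k, ζ i)
    (hstrict : (∑ i ∈ Ioc 0 N, ζ i) < (∑ i ∈ Ioc 0 (k - 1), ζ i) + ∑ i ∈ Ioc 0 k, ζ i) :
    False := by
  have h2s : (0:ℝ) ≤ 2 * s := by linarith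
  set a : ℝ := ∑ i ∈ Ioc 0 (k - 1), ζ i with ha_def
  set b : ℝ := (∑ i ∈ Ioc 0 k, ζ i) - ∑ i ∈ Ioc 0 N, ζ i with hb_def
  have ha : 0 ≤ a := by simpa using hpre 0 (Nat.zero_le _)
  have hb : 0 ≤ b := sub_nonneg.mpr (hsuf N hkN le_rfl)
  have hab : 0 < a + b := by rw [ha_def, hb_def]; linarith
  -- Right side bound
  have hR : (∑ j ∈ Ioc k N, ζ j * (x j - x k) ^ (-(2 * s)))
      ≤ (-b) * (x N - x k) ^ (-(2 * s)) := by
    have h0 := nsp_abel_le (fun m => ζ (k + m)) (fun m => (x (k + m) - x k) ^ (-(2 * s)))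
      (N - k) ?_ ?_
    · have e1 : (∑ m ∈ Ioc 0 (N - k), ζ (k + m) * (x (k + m) - x k) ^ (-(2 * s)))
          = ∑ j ∈ Ioc k N, ζ j * (x j - x k) ^ (-(2 * s)) := by
        have := nsp_shift (fun j => ζ j * (x j - x k) ^ (-(2 * s))) k (N - k)
        rwa [Nat.add_sub_cancel' hkN] at this
      have e2 : (∑ m ∈ Ioc 0 (N - k), ζ (k + m)) = -b := by
        have h := nsp_shift ζ k (N - k)
        rw [Nat.add_sub_cancel' hkN] at h
        have h2 := Finset.sum_Ioc_consecutive ζ (Nat.zero_le k) hkN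
        rw [h, hb_def]; linarith
      have e3 : k + (N - k) = N := Nat.add_sub_cancel' hkN
      rw [e3] at h0
      calc (∑ j ∈ Ioc k N, ζ j * (x j - x k) ^ (-(2 * s)))
          = ∑ m ∈ Ioc 0 (N - k), ζ (k + m) * (x (k + m) - x k) ^ (-(2 * s)) := e1.symm
        _ ≤ (∑ m ∈ Ioc 0 (N - k), ζ (k + m)) * (x N - x k) ^ (-(2 * s)) := h0
        _ = (-b) * (x N - x k) ^ (-(2 * s)) := by rw [e2]
    · intro m hm1 hm2
      have h := nsp_shift ζ k m
      have h2 := Finset.sum_Ioc_consecutive ζ (Nat.zero_le k) (Nat.le_add_right k m)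
      have h3 := hsuf (k + m) (Nat.le_add_right k m) (by omega)
      rw [h]; linarith
    · intro m hm1 hm2
      have hx1 : 0 < x (k + m) - x k :=
        sub_pos.mpr (hmono k (k + m) hk1 (by omega) (by omega))
      have hx2 : x (k + m) - x k ≤ x (k + m + 1) - x k := by
        have := hmono (k + m) (k + m + 1) (by omega) (by omega) (by omega)
        linarith
      exact nsp_anti h2s hx1 hx2
  -- Left side bound
  have hL : (-(∑ j ∈ Ioc 0 (k - 1), ζ j * (x k - x j) ^ (-(2 * s))))
      ≤ (-a) * (x k - x 1) ^ (-(2 * s)) := by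
    have h0 := nsp_abel_le (fun m => -ζ (k - m)) (fun m => (x k - x (k - m)) ^ (-(2 * s)))
      (k - 1) ?_ ?_
    · have e1 : (∑ m ∈ Ioc 0 (k - 1), ζ (k - m) * (x k - x (k - m)) ^ (-(2 * s)))
          = ∑ j ∈ Ioc 0 (k - 1), ζ j * (x k - x j) ^ (-(2 * s)) := by
        have e0 : k - 1 - (k - 1) = 0 := by omega
        have := nsp_reflect (fun j => ζ j * (x k - x j) ^ (-(2 * s))) k (k - 1) (by omega)
        rw [this, e0]
      have e2 : (∑ m ∈ Ioc 0 (k - 1), ζ (k - m)) = a := by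
        have e0 : k - 1 - (k - 1) = 0 := by omega
        have := nsp_reflect ζ k (k - 1) (by omega)
        rw [this, e0, ha_def]
      have e3 : k - (k - 1) = 1 := by omega
      have e4 : (∑ m ∈ Ioc 0 (k - 1), -ζ (k - m) * (x k - x (k - m)) ^ (-(2 * s)))
          = -(∑ m ∈ Ioc 0 (k - 1), ζ (k - m) * (x k - x (k - m)) ^ (-(2 * s))) := by
        rw [← Finset.sum_neg_distrib]
        exact Finset.sum_congr rfl (fun i _ => by ring)
      have e5 : (∑ m ∈ Ioc 0 (k - 1), -ζ (k - m)) = -a := by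
        rw [Finset.sum_neg_distrib, e2]
      simp only [e3] at h0
      rw [e4, e5, e1] at h0
      exact h0
    · intro m hm1 hm2
      have h := nsp_reflect ζ k m (by omega)
      have h1 : (∑ j ∈ Ioc 0 m, -ζ (k - j)) = -(∑ j ∈ Ioc 0 m, ζ (k - j)) := by
        rw [← Finset.sum_neg_distrib]
      have h2 := Finset.sum_Ioc_consecutive ζ (Nat.zero_le (k - 1 - m)) (show k-1-m ≤ k-1 by omega)
      have h3 := hpre (k - 1 - m) (by omega)
      rw [h1, h]
      linarith [h2, h3]
    · intro m hm1 hm2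
      have hx1 : 0 < x k - x (k - m) :=
        sub_pos.mpr (hmono (k - m) k (by omega) (by omega) hkN)
      have hx2 : x k - x (k - m) ≤ x k - x (k - (m + 1)) := by
        have := hmono (k - (m + 1)) (k - m) (by omega) (by omega) (by omega)
        linarith
      exact nsp_anti h2s hx1 hx2
  have hkey' := hkey k hk1 hkN
  -- combine
  have hsum : a * (x k - x 1) ^ (-(2 * s)) + b * (x N - x k) ^ (-(2 * s)) ≤ 0 := by
    nlinarith [hR, hL, hkey']
  have hpos : 0 < a * (x k - x 1) ^ (-(2 * s)) + b * (x N - x k) ^ (-(2 * s)) := by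
    have heL : 0 ≤ (x k - x 1) ^ (-(2 * s)) := by
      apply Real.rpow_nonneg
      rcases Nat.eq_or_lt_of_le hk1 with h | h
      · rw [← h]; simp
      · have := hmono 1 k le_rfl h hkN; linarith
    have heR : 0 ≤ (x N - x k) ^ (-(2 * s)) := by
      apply Real.rpow_nonneg
      rcases Nat.eq_or_lt_of_le hkN with h | h
      · rw [h]; simp
      · have := hmono k N hk1 h le_rfl; linarith
    rcases lt_or_ge 0 a with hA | hA
    · have hk2 : 2 ≤ k := by
        by_contra h
        have hk : k = 1 := by omega
        have hz : a = 0 := by rw [ha_def, hk]; simp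
        rw [hz] at hA
        exact lt_irrefl 0 hA
      have hxk : 0 < (x k - x 1) ^ (-(2 * s)) :=
        Real.rpow_pos_of_pos (sub_pos.mpr (hmono 1 k le_rfl (by omega) hkN)) _
      nlinarith
    · have hB : 0 < b := by
        rcases lt_or_eq_of_le ha with h | h
        · linarith
        · linarith
      have hkN' : k < N := by
        by_contra h
        have hk : k = N := by omega
        have hz : b = 0 := by rw [hb_def, hk]; simp
        rw [hz] at hB
        exact lt_irrefl 0 hB
      have hxN : 0 < (x N - x k) ^ (-(2 * s)) :=
        Real.rpow_pos_of_pos (sub_pos.mpr (hmono k N hk1 hkN' le_rfl)) _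
      nlinarith
  linarith

private lemma nsp_anti_strict {t a b : ℝ} (ht : 0 < t) (ha : 0 < a) (hab : a < b) :
    b ^ (-t) < a ^ (-t) := by
  rw [Real.rpow_neg (le_trans ha.le hab.le), Real.rpow_neg ha.le]
  exact inv_strictAnti₀ (Real.rpow_pos_of_pos ha t) (Real.rpow_lt_rpow ha.le hab ht)

private lemma nsp_pair (f : ℕ → ℝ) :
    ∀ M : ℕ, (∑ j ∈ Ioc 1 (2 * M + 1), f j) = ∑ m ∈ Ioc 0 M, (f (2 * m) + f (2 * m + 1)) := by
  intro M
  induction M with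
  | zero => simp
  | succ M ih =>
    have h1 : 2 * (M + 1) + 1 = (2 * M + 1) + 1 + 1 := by ring
    rw [h1, Finset.sum_Ioc_succ_top (by omega), Finset.sum_Ioc_succ_top (by omega), ih,
      Finset.sum_Ioc_succ_top (Nat.zero_le M)]
    have h2 : 2 * (M + 1) = 2 * M + 1 + 1 := by ring
    rw [h2]
    ring

private lemma nsp_argmax (g : ℕ → ℤ) : ∀ n : ℕ, ∃ k, k ≤ n ∧ ∀ j, j ≤ n → g j ≤ g k := by
  intro n
  induction n with
  | zero =>
    refine ⟨0, le_rfl, ?_⟩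
    intro j hj
    have : j = 0 := Nat.le_zero.mp hj
    rw [this]
  | succ n ih =>
    obtain ⟨k, hk, hmax⟩ := ih
    by_cases h : g (n + 1) ≤ g k
    · refine ⟨k, le_trans hk (Nat.le_succ n), ?_⟩
      intro j hj
      rcases Nat.lt_or_ge j (n + 1) with h2 | h2
      · exact hmax j (by omega)
      · have : j = n + 1 := by omega
        rw [this]; exact h
    · refine ⟨n + 1, le_rfl, ?_⟩
      intro j hj
      rcases Nat.lt_or_ge j (n + 1) with h2 | h2
      · exact le_trans (hmax j (by omega)) (by omega)
      · have : j = n + 1 := by omega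
        rw [this]

private lemma nsp_comb (N : ℕ) (hN : 2 ≤ N) (z : ℕ → ℤ)
    (hz : ∀ j, 1 ≤ j → j ≤ N → z j = 1 ∨ z j = -1) :
    (∃ k, 1 ≤ k ∧ k ≤ N ∧
      (∀ j, j ≤ k - 1 → (∑ i ∈ Ioc 0 j, z i) ≤ ∑ i ∈ Ioc 0 (k - 1), z i) ∧
      (∀ j, k ≤ j → j ≤ N → (∑ i ∈ Ioc 0 j, z i) ≤ ∑ i ∈ Ioc 0 k, z i) ∧
      (∑ i ∈ Ioc 0 N, z i) < (∑ i ∈ Ioc 0 (k - 1), z i) + ∑ i ∈ Ioc 0 k, z i) ∨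
    (∃ k, 1 ≤ k ∧ k ≤ N ∧
      (∀ j, j ≤ k - 1 → (∑ i ∈ Ioc 0 (k - 1), z i) ≤ ∑ i ∈ Ioc 0 j, z i) ∧
      (∀ j, k ≤ j → j ≤ N → (∑ i ∈ Ioc 0 k, z i) ≤ ∑ i ∈ Ioc 0 j, z i) ∧
      (∑ i ∈ Ioc 0 (k - 1), z i) + (∑ i ∈ Ioc 0 k, z i) < ∑ i ∈ Ioc 0 N, z i) ∨
    (¬ Even N ∧ ∃ ε : ℤ, (ε = 1 ∨ ε = -1) ∧
      ∀ j, 1 ≤ j → j ≤ N → z j = if Even j then -ε else ε) := by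
  classical
  set S : ℕ → ℤ := fun m => ∑ i ∈ Ioc 0 m, z i with hS
  have hSS : ∀ m : ℕ, (∑ i ∈ Ioc 0 m, z i) = S m := fun _ => rfl
  simp only [hSS]
  have hS0 : S 0 = 0 := by simp [hS]
  have hstep : ∀ j : ℕ, S (j + 1) = S j + z (j + 1) := by
    intro j
    simp only [hS]
    exact Finset.sum_Ioc_succ_top (Nat.zero_le j) z
  have hexM : ∃ k, k ≤ N ∧ ∀ j, j ≤ N → S j ≤ S k := nsp_argmax S N
  have hexm : ∃ k, k ≤ N ∧ ∀ j, j ≤ N → S k ≤ S j := by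
    obtain ⟨k, hk, hmax⟩ := nsp_argmax (fun m => -S m) N
    exact ⟨k, hk, fun j hj => by have := hmax j hj; simp at this; omega⟩
  set K := Nat.find hexM with hKdef
  have hKspec := Nat.find_spec hexM
  rw [← hKdef] at hKspec
  have hfirstM : ∀ j, j < K → S j < S K := by
    intro j hj
    have hmin := Nat.find_min hexM hj
    push_neg at hmin
    obtain ⟨i, hiN, hlt⟩ := hmin (by omega)
    exact lt_of_lt_of_le hlt (hKspec.2 i hiN)
  set Km := Nat.find hexm with hKmdef
  have hKmspec := Nat.find_spec hexm
  rw [← hKmdef] at hKmspec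
  have hfirstm : ∀ j, j < Km → S Km < S j := by
    intro j hj
    have hmin := Nat.find_min hexm hj
    push_neg at hmin
    obtain ⟨i, hiN, hlt⟩ := hmin (by omega)
    exact lt_of_le_of_lt (hKmspec.2 i hiN) hlt
  by_cases hA : 1 ≤ K ∧ S N < 2 * S K - 1
  · left
    have hK1 : S K = S (K - 1) + z K := by
      have := hstep (K - 1)
      rwa [show K - 1 + 1 = K by omega] at this
    have hK2 : S (K - 1) < S K := hfirstM (K - 1) (by omega)
    have hK3 := hz K hA.1 hKspec.1
    have hK4 : S (K - 1) = S K - 1 := by omega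
    refine ⟨K, hA.1, hKspec.1, ?_, ?_, ?_⟩
    · intro j hj
      have := hfirstM j (by omega)
      omega
    · intro j hj1 hj2
      exact hKspec.2 j hj2
    · omega
  · by_cases hB : 1 ≤ Km ∧ 2 * S Km + 1 < S N
    · right; left
      have hK1 : S Km = S (Km - 1) + z Km := by
        have := hstep (Km - 1)
        rwa [show Km - 1 + 1 = Km by omega] at this
      have hK2 : S Km < S (Km - 1) := hfirstm (Km - 1) (by omega)
      have hK3 := hz Km hB.1 hKmspec.1
      have hK4 : S (Km - 1) = S Km + 1 := by omega
      refine ⟨Km, hB.1, hKmspec.1, ?_, ?_, ?_⟩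
      · intro j hj
        have := hfirstm j (by omega)
        omega
      · intro j hj1 hj2
        exact hKmspec.2 j hj2
      · omega
    · right; right
      have hA' : K = 0 ∨ 2 * S K - 1 ≤ S N := by
        rcases Nat.eq_zero_or_pos K with h | h
        · exact Or.inl h
        · right; by_contra hc; exact hA ⟨h, by omega⟩
      have hB' : Km = 0 ∨ S N ≤ 2 * S Km + 1 := by
        rcases Nat.eq_zero_or_pos Km with h | h
        · exact Or.inl h
        · right; by_contra hc; exact hB ⟨h, by omega⟩
      have hKz : K = 0 → S K = 0 := by intro h; rw [h]; exact hS0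
      have hKmz : Km = 0 → S Km = 0 := by intro h; rw [h]; exact hS0
      have hb1 : 0 ≤ S K := by
        have := hKspec.2 0 (by omega); omega
      have hb2 : S Km ≤ 0 := by
        have := hKmspec.2 0 (by omega); omega
      have hb3 : S N ≤ S K := hKspec.2 N le_rfl
      have hb4 : S Km ≤ S N := hKmspec.2 N le_rfl
      have hb5 : S 1 ≤ S K := hKspec.2 1 (by omega)
      have hb6 : S Km ≤ S 1 := hKmspec.2 1 (by omega)
      have h1 : S 1 = z 1 := by
        have := hstep 0; rw [hS0] at this; simpa using this
      have hz1 := hz 1 le_rfl (by omega)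
      have hmain : (S K = 1 ∧ S Km = 0 ∧ S N = 1) ∨ (S K = 0 ∧ S Km = -1 ∧ S N = -1) := by
        omega
      rcases hmain with ⟨hMx, hmn, hSN⟩ | ⟨hMx, hmn, hSN⟩
      · -- path in {0,1}
        have hconf : ∀ j, j ≤ N → S j = if Even j then 0 else 1 := by
          intro j
          induction j with
          | zero => intro _; simp [hS0]
          | succ j ih =>
            intro hj
            have hih := ih (by omega)
            have hs := hstep j
            have hzj := hz (j + 1) (by omega) hj
            have hub := hKspec.2 (j + 1) hj
            have hlb := hKmspec.2 (j + 1) hj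
            rcases Nat.even_or_odd j with he | ho
            · have he1 : ¬ Even (j + 1) := by simp [Nat.even_add_one, he]
              simp only [he, if_pos] at hih
              simp only [he1, if_neg, not_false_iff]
              omega
            · have ho1 : Even (j + 1) := by simp [Nat.even_add_one, Nat.not_even_iff_odd.mpr ho]
              have ho2 : ¬ Even j := Nat.not_even_iff_odd.mpr ho
              simp only [ho2, if_neg, not_false_iff] at hih
              simp only [ho1, if_pos]
              omega
        refine ⟨?_, 1, Or.inl rfl, ?_⟩
        · intro hEN
          have := hconf N le_rfl
          rw [if_pos hEN] at this
          omega
        · intro j hj1 hj2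
          have hsj : S j = S (j - 1) + z j := by
            have := hstep (j - 1)
            rwa [show j - 1 + 1 = j by omega] at this
          have hc1 := hconf j hj2
          have hc2 := hconf (j - 1) (by omega)
          rcases Nat.even_or_odd j with he | ho
          · have he2 : ¬ Even (j - 1) := by
              intro hc
              have : Even ((j - 1) + 1) ↔ ¬ Even (j-1) := Nat.even_add_one
              rw [show j - 1 + 1 = j by omega] at this
              exact (this.mp he) hc
            rw [if_pos he] at hc1 ⊢
            rw [if_neg he2] at hc2
            omega
          · have ho0 : ¬ Even j := Nat.not_even_iff_odd.mpr ho
            have he2 : Even (j - 1) := by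
              by_contra hc
              have : Even ((j - 1) + 1) ↔ ¬ Even (j-1) := Nat.even_add_one
              rw [show j - 1 + 1 = j by omega] at this
              exact ho0 (this.mpr hc)
            rw [if_neg ho0] at hc1 ⊢
            rw [if_pos he2] at hc2
            omega
      · -- path in {-1,0}
        have hconf : ∀ j, j ≤ N → S j = if Even j then 0 else -1 := by
          intro j
          induction j with
          | zero => intro _; simp [hS0]
          | succ j ih =>
            intro hj
            have hih := ih (by omega)
            have hs := hstep j
            have hzj := hz (j + 1) (by omega) hj
            have hub := hKspec.2 (j + 1) hj
            have hlb := hKmspec.2 (j + 1) hj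
            rcases Nat.even_or_odd j with he | ho
            · have he1 : ¬ Even (j + 1) := by simp [Nat.even_add_one, he]
              simp only [he, if_pos] at hih
              simp only [he1, if_neg, not_false_iff]
              omega
            · have ho1 : Even (j + 1) := by simp [Nat.even_add_one, Nat.not_even_iff_odd.mpr ho]
              have ho2 : ¬ Even j := Nat.not_even_iff_odd.mpr ho
              simp only [ho2, if_neg, not_false_iff] at hih
              simp only [ho1, if_pos]
              omega
        refine ⟨?_, -1, Or.inr rfl, ?_⟩
        · intro hEN
          have := hconf N le_rfl
          rw [if_pos hEN] at this
          omega
        · intro j hj1 hj2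
          have hsj : S j = S (j - 1) + z j := by
            have := hstep (j - 1)
            rwa [show j - 1 + 1 = j by omega] at this
          have hc1 := hconf j hj2
          have hc2 := hconf (j - 1) (by omega)
          rcases Nat.even_or_odd j with he | ho
          · have he2 : ¬ Even (j - 1) := by
              intro hc
              have : Even ((j - 1) + 1) ↔ ¬ Even (j-1) := Nat.even_add_one
              rw [show j - 1 + 1 = j by omega] at this
              exact (this.mp he) hc
            rw [if_pos he] at hc1 ⊢
            rw [if_neg he2] at hc2
            omega
          · have ho0 : ¬ Even j := Nat.not_even_iff_odd.mpr ho
            have he2 : Even (j - 1) := by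
              by_contra hc
              have : Even ((j - 1) + 1) ↔ ¬ Even (j-1) := Nat.even_add_one
              rw [show j - 1 + 1 = j by omega] at this
              exact ho0 (this.mpr hc)
            rw [if_neg ho0] at hc1 ⊢
            rw [if_pos he2] at hc2
            omega

end NspHelpers

/-- Corollary 1.7: the particle system has no stationary points. -/
theorem no_stationary_points
    (s γ : ℝ) (hs : s ∈ Set.Ioo (0:ℝ) 1) (hγ : 0 < γ)
    (N : ℕ) (hN : 2 ≤ N) :
    ¬ ∃ (ζ : ℕ → ℝ) (x : ℕ → ℝ),
        (∀ i ∈ Finset.Icc 1 N, ζ i = 1 ∨ ζ i = -1) ∧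
        (∀ i : ℕ, 1 ≤ i → i < N → x i < x (i + 1)) ∧
        (∀ i ∈ Finset.Icc 1 N,
          (∑ j ∈ (Finset.Icc 1 N).erase i,
            ζ i * ζ j * (x i - x j) / (2 * s * |x i - x j| ^ (1 + 2 * s))) = 0) := by
  rintro ⟨ζ, x, hζ, hord, heq⟩
  obtain ⟨hs1, hs2⟩ := hs
  have h2s0 : (0:ℝ) < 2 * s := by linarith
  -- full strict monotonicity of positions
  have hmono : ∀ i j : ℕ, 1 ≤ i → i < j → j ≤ N → x i < x j := by
    intro i j hi hij hjN
    have key : ∀ j : ℕ, i + 1 ≤ j → j ≤ N → x i < x j := by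
      intro j hj
      induction j, hj using Nat.le_induction with
      | base => intro h; exact hord i hi (by omega)
      | succ j hj ih =>
        intro hN'
        have h1 := ih (by omega)
        have h2 := hord j (by omega) (by omega)
        linarith
    exact key j (by omega) hjN
  -- the balance equations in a convenient form
  have hkey : ∀ k : ℕ, 1 ≤ k → k ≤ N →
      (∑ j ∈ Ioc 0 (k - 1), ζ j * (x k - x j) ^ (-(2 * s)))
        = ∑ j ∈ Ioc k N, ζ j * (x j - x k) ^ (-(2 * s)) := by
    intro k hk1 hkN
    have hζk : ζ k ≠ 0 := by
      rcases hζ k (Finset.mem_Icc.mpr ⟨hk1, hkN⟩) with h | h <;> rw [h] <;> norm_num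
    have hk0 := heq k (Finset.mem_Icc.mpr ⟨hk1, hkN⟩)
    have hsplit : (Finset.Icc 1 N).erase k = Ioc 0 (k - 1) ∪ Ioc k N := by
      ext j
      simp only [Finset.mem_erase, Finset.mem_Icc, Finset.mem_union, Finset.mem_Ioc]
      omega
    have hdisj : Disjoint (Ioc 0 (k - 1)) (Ioc k N) := by
      rw [Finset.disjoint_left]
      intro j hj1 hj2
      rw [Finset.mem_Ioc] at hj1 hj2
      omega
    rw [hsplit, Finset.sum_union hdisj] at hk0
    have hterm1 : ∀ j ∈ Ioc 0 (k - 1),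
        ζ k * ζ j * (x k - x j) / (2 * s * |x k - x j| ^ (1 + 2 * s))
          = (ζ k / (2 * s)) * (ζ j * (x k - x j) ^ (-(2 * s))) := by
      intro j hj
      rw [Finset.mem_Ioc] at hj
      have hxp : 0 < x k - x j := sub_pos.mpr (hmono j k hj.1 (by omega) hkN)
      rw [abs_of_pos hxp, Real.rpow_add hxp 1 (2 * s), Real.rpow_one,
        Real.rpow_neg hxp.le]
      have h1 : x k - x j ≠ 0 := ne_of_gt hxp
      have h2 : (x k - x j) ^ (2 * s) ≠ 0 := ne_of_gt (Real.rpow_pos_of_pos hxp _)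
      have h3 : (2 : ℝ) * s ≠ 0 := ne_of_gt h2s0
      field_simp
    have hterm2 : ∀ j ∈ Ioc k N,
        ζ k * ζ j * (x k - x j) / (2 * s * |x k - x j| ^ (1 + 2 * s))
          = -((ζ k / (2 * s)) * (ζ j * (x j - x k) ^ (-(2 * s)))) := by
      intro j hj
      rw [Finset.mem_Ioc] at hj
      have hxp : 0 < x j - x k := sub_pos.mpr (hmono k j hk1 (by omega) hj.2)
      have hneg : x k - x j = -(x j - x k) := by ring
      rw [hneg, abs_neg, abs_of_pos hxp, Real.rpow_add hxp 1 (2 * s), Real.rpow_one,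
        Real.rpow_neg hxp.le]
      have h1 : x j - x k ≠ 0 := ne_of_gt hxp
      have h2 : (x j - x k) ^ (2 * s) ≠ 0 := ne_of_gt (Real.rpow_pos_of_pos hxp _)
      have h3 : (2 : ℝ) * s ≠ 0 := ne_of_gt h2s0
      field_simp
    rw [Finset.sum_congr rfl hterm1, Finset.sum_congr rfl hterm2,
      Finset.sum_neg_distrib, ← Finset.mul_sum, ← Finset.mul_sum] at hk0
    have hc : ζ k / (2 * s) ≠ 0 := div_ne_zero hζk (ne_of_gt h2s0)
    apply mul_left_cancel₀ hc
    linarith [hk0]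
  -- integer signs
  classical
  set z : ℕ → ℤ := fun j => if ζ j = 1 then 1 else -1 with hzdef
  have hzpm : ∀ j, 1 ≤ j → j ≤ N → z j = 1 ∨ z j = -1 := by
    intro j h1 h2
    by_cases h : ζ j = 1
    · left; simp [hzdef, h]
    · right; simp [hzdef, h]
  have hcast : ∀ j, 1 ≤ j → j ≤ N → ζ j = (z j : ℝ) := by
    intro j h1 h2
    rcases hζ j (Finset.mem_Icc.mpr ⟨h1, h2⟩) with h | h
    · rw [h]; simp [hzdef, h]
    · have hne : ζ j ≠ 1 := by rw [h]; norm_num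
      rw [h]; simp [hzdef, hne]
  have hScast : ∀ m, m ≤ N → (∑ i ∈ Ioc 0 m, ζ i) = ((∑ i ∈ Ioc 0 m, z i : ℤ) : ℝ) := by
    intro m hm
    push_cast
    refine Finset.sum_congr rfl ?_
    intro i hi
    rw [Finset.mem_Ioc] at hi
    exact hcast i hi.1 (le_trans hi.2 hm)
  rcases nsp_comb N hN z hzpm with ⟨k, hk1, hkN, hp, hsf, hst⟩ | ⟨k, hk1, hkN, hp, hsf, hst⟩
    | ⟨hodd, ε, hε, halt⟩
  · -- max case : apply kill to ζ
    refine nsp_kill s hs1 N ζ x hmono hkey k hk1 hkN ?_ ?_ ?_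
    · intro j hj
      rw [hScast j (by omega), hScast (k - 1) (by omega)]
      exact_mod_cast hp j hj
    · intro j hj1 hj2
      rw [hScast j (by omega), hScast k (by omega)]
      exact_mod_cast hsf j hj1 hj2
    · rw [hScast N le_rfl, hScast (k - 1) (by omega), hScast k (by omega)]
      exact_mod_cast hst
  · -- min case : apply kill to -ζ
    refine nsp_kill s hs1 N (fun j => -ζ j) x hmono ?_ k hk1 hkN ?_ ?_ ?_
    · intro k' h1 h2
      simp only [neg_mul]
      rw [Finset.sum_neg_distrib, Finset.sum_neg_distrib, hkey k' h1 h2]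
    · intro j hj
      rw [Finset.sum_neg_distrib, Finset.sum_neg_distrib]
      have h1 := hp j hj
      have h2 : ((∑ i ∈ Ioc 0 (k - 1), z i : ℤ) : ℝ) ≤ ((∑ i ∈ Ioc 0 j, z i : ℤ) : ℝ) := by
        exact_mod_cast h1
      rw [hScast j (by omega), hScast (k - 1) (by omega)]
      linarith
    · intro j hj1 hj2
      rw [Finset.sum_neg_distrib, Finset.sum_neg_distrib]
      have h1 := hsf j hj1 hj2
      have h2 : ((∑ i ∈ Ioc 0 k, z i : ℤ) : ℝ) ≤ ((∑ i ∈ Ioc 0 j, z i : ℤ) : ℝ) := by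
        exact_mod_cast h1
      rw [hScast j (by omega), hScast k (by omega)]
      linarith
    · rw [Finset.sum_neg_distrib, Finset.sum_neg_distrib, Finset.sum_neg_distrib]
      have h2 : ((∑ i ∈ Ioc 0 (k - 1), z i : ℤ) : ℝ) + ((∑ i ∈ Ioc 0 k, z i : ℤ) : ℝ)
          < ((∑ i ∈ Ioc 0 N, z i : ℤ) : ℝ) := by exact_mod_cast hst
      rw [hScast N le_rfl, hScast (k - 1) (by omega), hScast k (by omega)]
      linarith
  · -- alternating case
    have hN3 : 3 ≤ N := by
      have := Nat.not_even_iff.mp hodd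
      omega
    have hNodd : N % 2 = 1 := Nat.not_even_iff.mp hodd
    set M := N / 2 with hMdef
    have hNM : N = 2 * M + 1 := by omega
    have hM1 : 1 ≤ M := by omega
    have hkey1 := hkey 1 le_rfl (by omega)
    simp only [Nat.sub_self, show (1:ℕ) - 1 = 0 from rfl] at hkey1
    rw [show Ioc 0 0 = (∅ : Finset ℕ) from rfl, Finset.sum_empty] at hkey1
    have hR : (∑ j ∈ Ioc 1 N, ζ j * (x j - x 1) ^ (-(2 * s))) = 0 := hkey1.symm
    rw [hNM, nsp_pair (fun j => ζ j * (x j - x 1) ^ (-(2 * s))) M] at hR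
    have hε2 : (ε : ℝ) * (ε : ℝ) = 1 := by
      rcases hε with h | h <;> rw [h] <;> norm_num
    have hneg : ∀ m ∈ Ioc 0 M,
        (ε : ℝ) * ((fun j => ζ j * (x j - x 1) ^ (-(2 * s))) (2 * m)
          + (fun j => ζ j * (x j - x 1) ^ (-(2 * s))) (2 * m + 1)) < 0 := by
      intro m hm
      rw [Finset.mem_Ioc] at hm
      have hb1 : 1 ≤ 2 * m := by omega
      have hb2 : 2 * m + 1 ≤ N := by omega
      have hev : Even (2 * m) := ⟨m, by ring⟩
      have hodd2 : ¬ Even (2 * m + 1) := by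
        simp [Nat.even_add_one, hev]
      have hz1 : ζ (2 * m) = (-ε : ℤ) := by
        rw [hcast (2 * m) hb1 (by omega), halt (2 * m) hb1 (by omega), if_pos hev]
      have hz2 : ζ (2 * m + 1) = (ε : ℤ) := by
        rw [hcast (2 * m + 1) (by omega) hb2, halt (2 * m + 1) (by omega) hb2,
          if_neg hodd2]
      have hx1 : 0 < x (2 * m) - x 1 :=
        sub_pos.mpr (hmono 1 (2 * m) le_rfl (by omega) (by omega))
      have hxlt : x (2 * m) - x 1 < x (2 * m + 1) - x 1 := by
        have := hmono (2 * m) (2 * m + 1) (by omega) (by omega) hb2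
        linarith
      have hlt : (x (2 * m + 1) - x 1) ^ (-(2 * s)) < (x (2 * m) - x 1) ^ (-(2 * s)) :=
        nsp_anti_strict h2s0 hx1 hxlt
      simp only [hz1, hz2]
      push_cast
      nlinarith [hε2, hlt,
        Real.rpow_pos_of_pos hx1 (-(2 * s))]
    have hsum : (∑ m ∈ Ioc 0 M, (ε : ℝ) * ((fun j => ζ j * (x j - x 1) ^ (-(2 * s))) (2 * m)
        + (fun j => ζ j * (x j - x 1) ^ (-(2 * s))) (2 * m + 1))) < 0 :=
      Finset.sum_neg hneg ⟨1, by rw [Finset.mem_Ioc]; omega⟩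
    rw [← Finset.mul_sum, hR, mul_zero] at hsum
    exact lt_irrefl 0 hsum


end
end

section
/- Assume the segregate orientation (ζ_i = 1 for i = 1,…,K and ζ_i = −1 for i = K+1,…,N) with 0 < K < N, and assume the collision time T_c is finite. Then there exists c > 0, depending only on s, N, the initial gaps θ_i^0 := x_{i+1}^0 − x_i^0 and T_c, such that for every t ∈ [0,T_c] and every index i ∈ {1,…,N−1} with i ≠ K: x_{i+1}(t) − x_i(t) ≥ c. -/
open Real Filter Finset Topology NNReal
open scoped ENNReal

noncomputable section

private lemma aux_rpow_anti {e : ℝ} (he : 0 < e) {a b : ℝ} (ha : 0 < a) (hab : a ≤ b) :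
    b ^ (-e) ≤ a ^ (-e) :=
  Real.rpow_le_rpow_of_nonpos ha hab (by linarith)

private lemma aux_Ff_pos {s : ℝ} (hs : 0 < s) {w : ℝ} (hw : 0 < w) :
    w / (2 * s * |w| ^ (1 + 2 * s)) = w ^ (-(2 * s)) / (2 * s) := by
  rw [abs_of_pos hw, Real.rpow_add hw, Real.rpow_one, Real.rpow_neg hw.le]
  have h4 : w ^ (2 * s) ≠ 0 := (Real.rpow_pos_of_pos hw _).ne'
  have hw' : w ≠ 0 := hw.ne'
  have hs' : s ≠ 0 := hs.ne'
  field_simp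

private lemma aux_Ff_neg {s : ℝ} (hs : 0 < s) {w : ℝ} (hw : w < 0) :
    w / (2 * s * |w| ^ (1 + 2 * s)) = -((-w) ^ (-(2 * s)) / (2 * s)) := by
  have hw' : 0 < -w := by linarith
  have h := aux_Ff_pos hs hw'
  rw [abs_neg] at h
  rw [← h]
  ring

private lemma aux_hasDerivAt_shift (e c x : ℝ) (hx : 0 < x + c) :
    HasDerivAt (fun d : ℝ => (d + c) ^ (-e)) ((-e) * (x + c) ^ (-e - 1)) x := by
  have h1 : HasDerivAt (fun d : ℝ => d + c) 1 x := (hasDerivAt_id x).add_const c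
  have h2 := (Real.hasDerivAt_rpow_const (x := x + c) (p := -e) (Or.inl hx.ne')).comp x h1
  simpa [Function.comp_def] using h2

private lemma aux_phi_anti {e c : ℝ} (he : 0 < e) (hc : 0 < c)
    {d1 d2 : ℝ} (h1 : 0 < d1) (h12 : d1 ≤ d2) :
    d2 ^ (-e) - (d2 + c) ^ (-e) ≤ d1 ^ (-e) - (d1 + c) ^ (-e) := by
  have hderiv : ∀ d : ℝ, d1 ≤ d → HasDerivAt (fun d : ℝ => d ^ (-e) - (d + c) ^ (-e))
      ((-e) * d ^ (-e - 1) - (-e) * (d + c) ^ (-e - 1)) d := by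
    intro d hd
    have hd0 : 0 < d := lt_of_lt_of_le h1 hd
    exact (Real.hasDerivAt_rpow_const (Or.inl hd0.ne')).sub
      (aux_hasDerivAt_shift e c d (by linarith))
  have hanti : AntitoneOn (fun d : ℝ => d ^ (-e) - (d + c) ^ (-e)) (Set.Ici d1) := by
    apply antitoneOn_of_deriv_nonpos (convex_Ici d1)
    · intro d hd
      exact ((hderiv d hd).continuousAt).continuousWithinAt
    · intro d hd
      rw [interior_Ici] at hd
      exact ((hderiv d hd.le).differentiableAt).differentiableWithinAt
    · intro d hd
      rw [interior_Ici] at hd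
      have hd0 : 0 < d := lt_of_lt_of_le h1 hd.le
      rw [(hderiv d hd.le).deriv]
      have hmono : (d + c) ^ (-(e + 1)) ≤ d ^ (-(e + 1)) :=
        aux_rpow_anti (by linarith) hd0 (by linarith)
      rw [show -(e + 1) = -e - 1 by ring] at hmono
      nlinarith
  exact hanti (Set.self_mem_Ici) h12 h12

private lemma aux_rpow_sub_le {e : ℝ} (he : 0 < e) {a b : ℝ} (ha : 0 < a) (hab : a ≤ b) :
    a ^ (-e) - b ^ (-e) ≤ e * (b - a) * a ^ (-e - 1) := by
  have hderiv : ∀ d : ℝ, a ≤ d → HasDerivAt (fun d : ℝ => -(d ^ (-e)) - e * d * a ^ (-e - 1))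
      (-((-e) * d ^ (-e - 1)) - e * a ^ (-e - 1)) d := by
    intro d hd
    have hd0 : 0 < d := lt_of_lt_of_le ha hd
    have hlin : HasDerivAt (fun d : ℝ => e * d * a ^ (-e - 1)) (e * a ^ (-e - 1)) d := by
      simpa using ((hasDerivAt_id d).const_mul e).mul_const (a ^ (-e - 1))
    exact ((Real.hasDerivAt_rpow_const (Or.inl hd0.ne')).neg).sub hlin
  have hanti : AntitoneOn (fun d : ℝ => -(d ^ (-e)) - e * d * a ^ (-e - 1)) (Set.Ici a) := by
    apply antitoneOn_of_deriv_nonpos (convex_Ici a)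
    · intro d hd
      exact ((hderiv d hd).continuousAt).continuousWithinAt
    · intro d hd
      rw [interior_Ici] at hd
      exact ((hderiv d hd.le).differentiableAt).differentiableWithinAt
    · intro d hd
      rw [interior_Ici] at hd
      have hd0 : 0 < d := lt_of_lt_of_le ha hd.le
      rw [(hderiv d hd.le).deriv]
      have hmono : d ^ (-(e + 1)) ≤ a ^ (-(e + 1)) := aux_rpow_anti (by linarith) ha hd.le
      rw [show -(e + 1) = -e - 1 by ring] at hmono
      nlinarith
  have h := hanti Set.self_mem_Ici hab hab
  simp only at h
  nlinarith [h]

private lemma aux_telescope (g : ℕ → ℝ) (n : ℕ) :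
    ∑ k ∈ Finset.Icc 1 n, (g k - g (k + 1)) = g 1 - g (n + 1) := by
  induction n with
  | zero => simp
  | succ m ih =>
    rw [Finset.sum_Icc_succ_top (by omega), ih]
    ring

set_option maxHeartbeats 1000000 in
private lemma aux_sep_core (s : ℝ) (hs0 : 0 < s) (N K : ℕ) (hK : 0 < K) (hKN : K < N)
    (ζ : ℕ → ℝ) (hζ : Segregate ζ K N)
    (p : ℕ → ℝ) (c lam : ℝ) (hc : 0 < c)
    (hlam : lam = 1 + ((N : ℝ) + 1) ^ (-(2 * s)) / (2 * s * ((N : ℝ) + 2)))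
    (hord : ∀ j : ℕ, 1 ≤ j → j < N → p j < p (j + 1))
    (hgap : ∀ j : ℕ, 1 ≤ j → j < N → j ≠ K → c ≤ p (j + 1) - p j)
    (i : ℕ) (hi1 : 1 ≤ i) (hiN : i < N) (hiK : i ≠ K)
    (hθlam : p (i + 1) - p i ≤ lam * c) :
    (1 / (2 * s)) * (((N : ℝ) + 1) * c) ^ (-(2 * s)) ≤
      (∑ j ∈ (Finset.Icc 1 N).erase (i + 1),
          ζ (i + 1) * ζ j * (p (i + 1) - p j) / (2 * s * |p (i + 1) - p j| ^ (1 + 2 * s))) -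
        ∑ j ∈ (Finset.Icc 1 N).erase i,
          ζ i * ζ j * (p i - p j) / (2 * s * |p i - p j| ^ (1 + 2 * s)) := by
  classical
  have h2s : 0 < 2 * s := by linarith
  -- position monotonicity
  have pmono : ∀ b a : ℕ, 1 ≤ a → a < b → b ≤ N → p a < p b := by
    intro b
    induction b with
    | zero => omega
    | succ n ih =>
      intro a ha1 hab hbN
      rcases Nat.lt_succ_iff_lt_or_eq.1 hab with h | h
      · exact lt_trans (ih a ha1 h (by omega)) (hord n (by omega) (by omega))
      · subst h
        exact hord a ha1 (by omega)
  -- gap sums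
  have pgap : ∀ b a : ℕ, 1 ≤ a → a ≤ b → b ≤ N → (b ≤ K ∨ K < a) →
      ((b - a : ℕ) : ℝ) * c ≤ p b - p a := by
    intro b
    induction b with
    | zero => intro a ha1 hab _ _; omega
    | succ n ih =>
      intro a ha1 hab hbN hcond
      rcases Nat.le_succ_iff.1 hab with h | h
      · have hn1 : 1 ≤ n := le_trans ha1 h
        have hgapn : c ≤ p (n + 1) - p n := hgap n hn1 (by omega) (by omega)
        have hih := ih a ha1 h (by omega) (by omega)
        have hcast : ((n + 1 - a : ℕ) : ℝ) = ((n - a : ℕ) : ℝ) + 1 := by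
          have h2 : n + 1 - a = (n - a) + 1 := by omega
          rw [h2]; push_cast; ring
        rw [hcast]; linarith
      · subst h; simp
  -- ζ facts
  have hζpm : ∀ j : ℕ, 1 ≤ j → j ≤ N → ζ j = 1 ∨ ζ j = -1 := by
    intro j hj1 hjN
    by_cases h : j ≤ K
    · exact Or.inl (hζ.1 j hj1 h)
    · exact Or.inr (hζ.2 j (by omega) hjN)
  have hζiff : ∀ j : ℕ, 1 ≤ j → j ≤ N → (ζ j = 1 ↔ j ≤ K) := by
    intro j hj1 hjN
    constructor
    · intro h
      by_contra hh
      have := hζ.2 j (by omega) hjN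
      rw [h] at this; norm_num at this
    · exact hζ.1 j hj1
  have hζsame : ζ (i + 1) = ζ i := by
    by_cases h : i ≤ K
    · rw [hζ.1 i hi1 h, hζ.1 (i + 1) (by omega) (by omega)]
    · rw [hζ.2 i (by omega) (by omega), hζ.2 (i + 1) (by omega) (by omega)]
  have hζsq : ζ i * ζ i = 1 := by
    rcases hζpm i hi1 (by omega) with h | h <;> rw [h] <;> norm_num
  -- θ
  set θ : ℝ := p (i + 1) - p i with hθ
  have hθpos : 0 < θ := sub_pos.2 (hord i hi1 hiN)
  have hθc : c ≤ θ := hgap i hi1 hiN hiK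
  -- lam facts
  set q : ℝ := ((N : ℝ) + 1) ^ (-(2 * s)) with hqdef
  have hqpos : 0 < q := Real.rpow_pos_of_pos (by positivity) _
  have hq1 : q ≤ 1 := Real.rpow_le_one_of_one_le_of_nonpos (by norm_num) (by linarith)
  have hlam1 : 1 < lam := by
    rw [hlam]
    have : 0 < q / (2 * s * ((N : ℝ) + 2)) := by positivity
    linarith
  -- the g function
  set g : ℕ → ℝ := fun k => ((k : ℝ) * c) ^ (-(2 * s)) with hgdef
  have hgnn : ∀ k : ℕ, 0 ≤ g k := fun k => Real.rpow_nonneg (by positivity) _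
  have hhnn : ∀ k : ℕ, 1 ≤ k → 0 ≤ g k - g (k + 1) := by
    intro k hk
    have hk0 : 0 < ((k : ℝ) * c) := by
      have : (1 : ℝ) ≤ (k : ℝ) := by exact_mod_cast hk
      nlinarith
    have : ((k : ℝ) + 1) * c ≥ (k : ℝ) * c := by nlinarith
    have h2 := aux_rpow_anti h2s hk0 (show ((k : ℝ)) * c ≤ ((k : ℝ) + 1) * c by nlinarith)
    simp only [hgdef]
    push_cast
    linarith
  have hcnn : 0 ≤ (lam - 1) * c ^ (-(2 * s)) := by
    have := Real.rpow_nonneg hc.le (-(2 * s))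
    nlinarith
  -- the key inequality
  have key : ∀ (dz : ℝ) (k : ℕ), 1 ≤ k → 0 < dz → ((k : ℝ) * c ≤ dz) →
      -((1 / (2 * s)) * (g k - g (k + 1)) + (lam - 1) * c ^ (-(2 * s))) ≤
        (dz + θ) ^ (-(2 * s)) / (2 * s) - dz ^ (-(2 * s)) / (2 * s) := by
    intro dz k hk hdz hkc
    have hk1r : (1 : ℝ) ≤ (k : ℝ) := by exact_mod_cast hk
    have hk0 : 0 < (k : ℝ) * c := by nlinarith
    have h1 : dz ^ (-(2 * s)) - (dz + c) ^ (-(2 * s)) ≤ g k - g (k + 1) := by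
      have hphi := aux_phi_anti h2s hc hk0 hkc
      have e1 : g k = ((k : ℝ) * c) ^ (-(2 * s)) := by simp only [hgdef]
      have e2 : g (k + 1) = ((k : ℝ) * c + c) ^ (-(2 * s)) := by
        simp only [hgdef]; push_cast; rw [add_mul, one_mul]
      rw [e1, e2]; exact hphi
    have hbase : 0 < dz + c := by linarith
    have h2a := aux_rpow_sub_le h2s hbase (show dz + c ≤ dz + θ by linarith)
    have hccle : (dz + c) ^ (-(2 * s) - 1) ≤ c ^ (-(2 * s) - 1) := by
      have h := aux_rpow_anti (e := 2 * s + 1) (by linarith) hc (by linarith : c ≤ dz + c)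
      rw [show -(2 * s + 1) = -(2 * s) - 1 by ring] at h
      exact h
    have hθlc : θ - c ≤ (lam - 1) * c := by nlinarith [hθlam]
    have hrpownn : 0 ≤ (dz + c) ^ (-(2 * s) - 1) := Real.rpow_nonneg hbase.le _
    have hcpow : c * c ^ (-(2 * s) - 1) = c ^ (-(2 * s)) := by
      have h := Real.rpow_add hc 1 (-(2 * s) - 1)
      rw [Real.rpow_one] at h
      rw [show (1 + (-(2 * s) - 1)) = -(2 * s) by ring] at h
      exact h.symm
    have h2 : (dz + c) ^ (-(2 * s)) - (dz + θ) ^ (-(2 * s)) ≤ 2 * s * (lam - 1) * c ^ (-(2 * s)) := by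
      have hfac1 : 2 * s * (dz + θ - (dz + c)) ≤ 2 * s * ((lam - 1) * c) := by
        apply mul_le_mul_of_nonneg_left _ h2s.le
        linarith
      have hchain : 2 * s * (dz + θ - (dz + c)) * (dz + c) ^ (-(2 * s) - 1) ≤
          2 * s * ((lam - 1) * c) * (c ^ (-(2 * s) - 1)) := by
        apply mul_le_mul hfac1 hccle hrpownn
        have h0 : 0 ≤ (lam - 1) * c := by nlinarith
        have := mul_nonneg h2s.le h0
        linarith
      have heq : 2 * s * ((lam - 1) * c) * (c ^ (-(2 * s) - 1)) = 2 * s * (lam - 1) * c ^ (-(2 * s)) := by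
        rw [← hcpow]; ring
      linarith [h2a, hchain]
    have hmain : dz ^ (-(2 * s)) - (dz + θ) ^ (-(2 * s)) ≤
        (g k - g (k + 1)) + 2 * s * (lam - 1) * c ^ (-(2 * s)) := by linarith
    have hmul := mul_le_mul_of_nonneg_left hmain (show (0 : ℝ) ≤ 1 / (2 * s) by positivity)
    have hs2ne : (2 * s) ≠ 0 := h2s.ne'
    have hexp : (1 / (2 * s)) * ((g k - g (k + 1)) + 2 * s * (lam - 1) * c ^ (-(2 * s))) =
        (1 / (2 * s)) * (g k - g (k + 1)) + (lam - 1) * c ^ (-(2 * s)) := by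
      field_simp
    have hexp2 : (1 / (2 * s)) * (dz ^ (-(2 * s)) - (dz + θ) ^ (-(2 * s))) =
        dz ^ (-(2 * s)) / (2 * s) - (dz + θ) ^ (-(2 * s)) / (2 * s) := by ring
    linarith [hmul]
  -- finsets
  set T : Finset ℕ := Finset.Icc 1 N with hT
  have hiT : i ∈ T := Finset.mem_Icc.2 ⟨hi1, by omega⟩
  have hi1T : i + 1 ∈ T := Finset.mem_Icc.2 ⟨by omega, by omega⟩
  set P : Finset ℕ := (T.erase (i + 1)).erase i with hPdef
  have hPmem : ∀ j ∈ P, 1 ≤ j ∧ j ≤ N ∧ j ≠ i ∧ j ≠ i + 1 := by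
    intro j hj
    simp only [hPdef, Finset.mem_erase, hT, Finset.mem_Icc] at hj
    exact ⟨hj.2.2.1, hj.2.2.2, hj.1, hj.2.1⟩
  have hsplit1 : T.erase (i + 1) = insert i P := by
    rw [hPdef, Finset.insert_erase (Finset.mem_erase.2 ⟨by omega, hiT⟩)]
  have hsplit2 : T.erase i = insert (i + 1) P := by
    have hcomm : (T.erase (i + 1)).erase i = (T.erase i).erase (i + 1) :=
      Finset.erase_right_comm
    rw [hPdef, hcomm, Finset.insert_erase (Finset.mem_erase.2 ⟨by omega, hi1T⟩)]
  have hiP : i ∉ P := Finset.notMem_erase _ _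
  have hi1P : i + 1 ∉ P := by
    intro h
    exact Finset.notMem_erase (i + 1) T (Finset.mem_of_mem_erase h)
  -- index function
  set kf : ℕ → ℕ := fun j => if j < i then i - j else j - i - 1 with hkf
  -- per-particle bound
  have hAj : ∀ j ∈ P,
      -((1 / (2 * s)) * (g (kf j) - g (kf j + 1)) + (lam - 1) * c ^ (-(2 * s))) ≤
        ζ (i + 1) * ζ j * (p (i + 1) - p j) / (2 * s * |p (i + 1) - p j| ^ (1 + 2 * s)) -
          ζ i * ζ j * (p i - p j) / (2 * s * |p i - p j| ^ (1 + 2 * s)) := by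
    intro j hj
    obtain ⟨hj1, hjN, hji, hji1⟩ := hPmem j hj
    have hwpm : ζ i * ζ j = 1 ∨ ζ i * ζ j = -1 := by
      rcases hζpm i hi1 (by omega) with h | h <;> rcases hζpm j hj1 hjN with h' | h' <;>
        rw [h, h'] <;> norm_num
    have hζj1 : ζ i * ζ j = 1 → ((i ≤ K ∧ j ≤ K) ∨ (K < i ∧ K < j)) := by
      intro hw
      rcases hζpm i hi1 (by omega) with h | h
      · left
        have hiK' : i ≤ K := (hζiff i hi1 (by omega)).1 h
        have hzj : ζ j = 1 := by rw [h] at hw; linarith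
        exact ⟨hiK', (hζiff j hj1 hjN).1 hzj⟩
      · right
        have hiK' : ¬ i ≤ K := fun hh => by
          rw [(hζiff i hi1 (by omega)).2 hh] at h; norm_num at h
        have hζj : ζ j = -1 := by rw [h] at hw; linarith
        have hjK' : ¬ j ≤ K := fun hh => by
          rw [(hζiff j hj1 hjN).2 hh] at hζj; norm_num at hζj
        omega
    rcases Nat.lt_or_ge j i with hlt | hge
    · -- j to the left
      have hkfj : kf j = i - j := by simp only [hkf]; rw [if_pos hlt]
      have hk1 : 1 ≤ i - j := by omega
      have hdzpos : 0 < p i - p j := sub_pos.2 (pmono i j hj1 hlt (by omega))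
      have hdy : p (i + 1) - p j = (p i - p j) + θ := by rw [hθ]; ring
      have hdypos : 0 < p (i + 1) - p j := by linarith
      have e1 : ζ (i + 1) * ζ j * (p (i + 1) - p j) / (2 * s * |p (i + 1) - p j| ^ (1 + 2 * s)) =
          ζ i * ζ j * ((p i - p j + θ) ^ (-(2 * s)) / (2 * s)) := by
        rw [mul_div_assoc, aux_Ff_pos hs0 hdypos, hζsame, hdy]
      have e2 : ζ i * ζ j * (p i - p j) / (2 * s * |p i - p j| ^ (1 + 2 * s)) =
          ζ i * ζ j * ((p i - p j) ^ (-(2 * s)) / (2 * s)) := by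
        rw [mul_div_assoc, aux_Ff_pos hs0 hdzpos]
      rw [e1, e2, hkfj]
      rcases hwpm with hw | hw
      · have hblock := hζj1 hw
        have hcond : i ≤ K ∨ K < j := by omega
        have hkc : ((i - j : ℕ) : ℝ) * c ≤ p i - p j :=
          pgap i j hj1 (le_of_lt hlt) (by omega) hcond
        have hkey := key (p i - p j) (i - j) hk1 hdzpos hkc
        rw [hw, one_mul, one_mul]
        exact hkey
      · rw [hw]
        have h0 : (p i - p j + θ) ^ (-(2 * s)) ≤ (p i - p j) ^ (-(2 * s)) :=
          aux_rpow_anti h2s hdzpos (by linarith)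
        have hknn := hhnn (i - j) hk1
        have hA : 0 ≤ (1 / (2 * s)) * (g (i - j) - g (i - j + 1)) :=
          mul_nonneg (by positivity) hknn
        have hdiv : (p i - p j + θ) ^ (-(2 * s)) / (2 * s) ≤ (p i - p j) ^ (-(2 * s)) / (2 * s) := by
          gcongr
        nlinarith [hcnn]
    · -- j to the right
      have hj2 : i + 1 < j := by omega
      have hkfj : kf j = j - i - 1 := by simp only [hkf]; rw [if_neg (by omega)]
      have hk1 : 1 ≤ j - i - 1 := by omega
      have hdzpos : 0 < p j - p (i + 1) := sub_pos.2 (pmono j (i + 1) (by omega) hj2 hjN)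
      have hneg1 : p (i + 1) - p j < 0 := by linarith
      have hneg2 : p i - p j < 0 := by
        have : θ = p (i + 1) - p i := hθ
        linarith
      have e1 : ζ (i + 1) * ζ j * (p (i + 1) - p j) / (2 * s * |p (i + 1) - p j| ^ (1 + 2 * s)) =
          ζ i * ζ j * (-((p j - p (i + 1)) ^ (-(2 * s)) / (2 * s))) := by
        rw [mul_div_assoc, aux_Ff_neg hs0 hneg1, hζsame, neg_sub]
      have e2 : ζ i * ζ j * (p i - p j) / (2 * s * |p i - p j| ^ (1 + 2 * s)) =
          ζ i * ζ j * (-((p j - p (i + 1) + θ) ^ (-(2 * s)) / (2 * s))) := by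
        rw [mul_div_assoc, aux_Ff_neg hs0 hneg2, neg_sub,
          show p j - p i = p j - p (i + 1) + θ by rw [hθ]; ring]
      rw [e1, e2, hkfj]
      rcases hwpm with hw | hw
      · have hblock := hζj1 hw
        have hcond : j ≤ K ∨ K < i + 1 := by omega
        have hkc' : ((j - (i + 1) : ℕ) : ℝ) * c ≤ p j - p (i + 1) :=
          pgap j (i + 1) (by omega) (by omega) hjN hcond
        have hkc : ((j - i - 1 : ℕ) : ℝ) * c ≤ p j - p (i + 1) := by
          rw [show j - i - 1 = j - (i + 1) by omega]; exact hkc'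
        have hkey := key (p j - p (i + 1)) (j - i - 1) hk1 hdzpos hkc
        rw [hw, one_mul, one_mul]
        linarith [hkey]
      · rw [hw]
        have h0 : (p j - p (i + 1) + θ) ^ (-(2 * s)) ≤ (p j - p (i + 1)) ^ (-(2 * s)) :=
          aux_rpow_anti h2s hdzpos (by linarith)
        have hknn := hhnn (j - i - 1) hk1
        have hA : 0 ≤ (1 / (2 * s)) * (g (j - i - 1) - g (j - i - 1 + 1)) :=
          mul_nonneg (by positivity) hknn
        have hdiv : (p j - p (i + 1) + θ) ^ (-(2 * s)) / (2 * s) ≤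
            (p j - p (i + 1)) ^ (-(2 * s)) / (2 * s) := by gcongr
        nlinarith [hcnn]
  -- counting bound
  have hcount : ∑ j ∈ P, (g (kf j) - g (kf j + 1)) ≤ 2 * (g 1 - g (N + 1)) := by
    classical
    have hhnn' : ∀ k ∈ Finset.Icc 1 N, 0 ≤ g k - g (k + 1) := fun k hk =>
      hhnn k (Finset.mem_Icc.1 hk).1
    set L : Finset ℕ := P.filter (fun j => j < i) with hL
    set R : Finset ℕ := P.filter (fun j => ¬ j < i) with hR
    have hPLR : P = L ∪ R := (Finset.filter_union_filter_not_eq _ P).symm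
    have hdisj : Disjoint L R := Finset.disjoint_filter_filter_not P P _
    rw [hPLR, Finset.sum_union hdisj]
    have hLsum : ∑ j ∈ L, (g (kf j) - g (kf j + 1)) ≤ g 1 - g (N + 1) := by
      have h1 : ∑ j ∈ L, (g (kf j) - g (kf j + 1)) =
          ∑ j ∈ L, (g (i - j) - g (i - j + 1)) := by
        apply Finset.sum_congr rfl
        intro j hj
        have : j < i := (Finset.mem_filter.1 hj).2
        simp only [hkf, if_pos this]
      have hinj : ∀ x ∈ L, ∀ y ∈ L, i - x = i - y → x = y := by
        intro a ha b hb hab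
        have ha' : a < i := (Finset.mem_filter.1 ha).2
        have hb' : b < i := (Finset.mem_filter.1 hb).2
        omega
      have h2 : ∑ j ∈ L, (g (i - j) - g (i - j + 1)) =
          ∑ k ∈ L.image (fun j => i - j), (g k - g (k + 1)) :=
        (Finset.sum_image (f := fun k => g k - g (k + 1)) hinj).symm
      have hsub : L.image (fun j => i - j) ⊆ Finset.Icc 1 N := by
        intro k hk
        obtain ⟨j, hj, rfl⟩ := Finset.mem_image.1 hk
        have hj' : j < i := (Finset.mem_filter.1 hj).2
        have hj1 : 1 ≤ j := (hPmem j (Finset.mem_filter.1 hj).1).1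
        exact Finset.mem_Icc.2 ⟨by omega, by omega⟩
      rw [h1, h2, ← aux_telescope g N]
      exact Finset.sum_le_sum_of_subset_of_nonneg hsub (fun k hk _ => hhnn' k hk)
    have hRsum : ∑ j ∈ R, (g (kf j) - g (kf j + 1)) ≤ g 1 - g (N + 1) := by
      have h1 : ∑ j ∈ R, (g (kf j) - g (kf j + 1)) =
          ∑ j ∈ R, (g (j - i - 1) - g (j - i - 1 + 1)) := by
        apply Finset.sum_congr rfl
        intro j hj
        have : ¬ j < i := (Finset.mem_filter.1 hj).2
        simp only [hkf, if_neg this]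
      have hinj : ∀ x ∈ R, ∀ y ∈ R, x - i - 1 = y - i - 1 → x = y := by
        intro a ha b hb hab
        have ha2 := hPmem a (Finset.mem_filter.1 ha).1
        have hb2 := hPmem b (Finset.mem_filter.1 hb).1
        have ha' : ¬ a < i := (Finset.mem_filter.1 ha).2
        have hb' : ¬ b < i := (Finset.mem_filter.1 hb).2
        omega
      have h2 : ∑ j ∈ R, (g (j - i - 1) - g (j - i - 1 + 1)) =
          ∑ k ∈ R.image (fun j => j - i - 1), (g k - g (k + 1)) :=
        (Finset.sum_image (f := fun k => g k - g (k + 1)) hinj).symm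
      have hsub : R.image (fun j => j - i - 1) ⊆ Finset.Icc 1 N := by
        intro k hk
        obtain ⟨j, hj, rfl⟩ := Finset.mem_image.1 hk
        have hj' : ¬ j < i := (Finset.mem_filter.1 hj).2
        obtain ⟨hj1, hjN, hji, hji1⟩ := hPmem j (Finset.mem_filter.1 hj).1
        exact Finset.mem_Icc.2 ⟨by omega, by omega⟩
      rw [h1, h2, ← aux_telescope g N]
      exact Finset.sum_le_sum_of_subset_of_nonneg hsub (fun k hk _ => hhnn' k hk)
    linarith
  -- cardinality
  have hcard : ((P.card : ℕ) : ℝ) ≤ (N : ℝ) := by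
    have h1 : P ⊆ T := subset_trans (Finset.erase_subset _ _) (Finset.erase_subset _ _)
    have h2 : P.card ≤ T.card := Finset.card_le_card h1
    have h3 : T.card = N := by rw [hT, Nat.card_Icc]; omega
    exact_mod_cast h3 ▸ h2
  -- assemble
  rw [hsplit1, hsplit2, Finset.sum_insert hiP, Finset.sum_insert hi1P]
  have hθpos' : 0 < p (i + 1) - p i := hord i hi1 hiN |> sub_pos.2
  have hpair1 : ζ (i + 1) * ζ i * (p (i + 1) - p i) / (2 * s * |p (i + 1) - p i| ^ (1 + 2 * s)) =
      θ ^ (-(2 * s)) / (2 * s) := by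
    rw [mul_div_assoc, aux_Ff_pos hs0 hθpos', hζsame, hζsq, one_mul, ← hθ]
  have hpair2 : ζ i * ζ (i + 1) * (p i - p (i + 1)) / (2 * s * |p i - p (i + 1)| ^ (1 + 2 * s)) =
      -(θ ^ (-(2 * s)) / (2 * s)) := by
    rw [mul_div_assoc, aux_Ff_neg hs0 (show p i - p (i + 1) < 0 by linarith), hζsame, hζsq,
      one_mul, neg_sub, ← hθ]
  rw [hpair1, hpair2]
  -- sum lower bound
  have hsumle := Finset.sum_le_sum hAj
  have hlhs : ∑ j ∈ P, -((1 / (2 * s)) * (g (kf j) - g (kf j + 1)) + (lam - 1) * c ^ (-(2 * s))) =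
      -((1 / (2 * s)) * (∑ j ∈ P, (g (kf j) - g (kf j + 1))) +
        (P.card : ℝ) * ((lam - 1) * c ^ (-(2 * s)))) := by
    rw [Finset.sum_neg_distrib, Finset.sum_add_distrib, Finset.sum_const, ← Finset.mul_sum,
      nsmul_eq_mul]
  have hsub : ∑ j ∈ P, (ζ (i + 1) * ζ j * (p (i + 1) - p j) / (2 * s * |p (i + 1) - p j| ^ (1 + 2 * s)) -
      ζ i * ζ j * (p i - p j) / (2 * s * |p i - p j| ^ (1 + 2 * s))) =
      (∑ j ∈ P, ζ (i + 1) * ζ j * (p (i + 1) - p j) / (2 * s * |p (i + 1) - p j| ^ (1 + 2 * s))) -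
      ∑ j ∈ P, ζ i * ζ j * (p i - p j) / (2 * s * |p i - p j| ^ (1 + 2 * s)) :=
    Finset.sum_sub_distrib _ _
  rw [hsub, hlhs] at hsumle
  -- numeric facts
  have hXpos : 0 < c ^ (-(2 * s)) := Real.rpow_pos_of_pos hc _
  have hg1 : g 1 = c ^ (-(2 * s)) := by simp only [hgdef]; norm_num
  have hgN1 : g (N + 1) = q * c ^ (-(2 * s)) := by
    simp only [hgdef, hqdef]
    push_cast
    rw [Real.mul_rpow (by positivity) hc.le]
  have hθm : (1 - 2 * s * (lam - 1)) * c ^ (-(2 * s)) ≤ θ ^ (-(2 * s)) := by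
    have hlc : 0 < lam * c := by nlinarith
    have h1 : θ ^ (-(2 * s)) ≥ (lam * c) ^ (-(2 * s)) := aux_rpow_anti h2s (by linarith) hθlam
    have h2 : (lam * c) ^ (-(2 * s)) = lam ^ (-(2 * s)) * c ^ (-(2 * s)) :=
      Real.mul_rpow (by linarith) hc.le
    have h3 : (1 : ℝ) - lam ^ (-(2 * s)) ≤ 2 * s * (lam - 1) := by
      have := aux_rpow_sub_le h2s one_pos hlam1.le
      simpa using this
    nlinarith [Real.rpow_nonneg (show (0:ℝ) ≤ lam by linarith) (-(2 * s))]
  have hlamval : 2 * s * ((N : ℝ) + 2) * (lam - 1) = q := by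
    rw [hlam]
    field_simp
    ring
  -- final arithmetic
  have hgoalL : (((N : ℝ) + 1) * c) ^ (-(2 * s)) = q * c ^ (-(2 * s)) := by
    rw [hqdef, Real.mul_rpow (by positivity) hc.le]
  rw [hgoalL]
  have hNq : 2 * s * ((N : ℝ) + 2) * ((lam - 1) * c ^ (-(2 * s))) = q * c ^ (-(2 * s)) := by
    rw [← hlamval]; ring
  have hcardmul : (P.card : ℝ) * ((lam - 1) * c ^ (-(2 * s))) ≤
      (N : ℝ) * ((lam - 1) * c ^ (-(2 * s))) :=
    mul_le_mul_of_nonneg_right hcard hcnn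
  have hSig : ∑ j ∈ P, (g (kf j) - g (kf j + 1)) ≤ 2 * (c ^ (-(2 * s)) - q * c ^ (-(2 * s))) := by
    have heq2 : 2 * (g 1 - g (N + 1)) = 2 * (c ^ (-(2 * s)) - q * c ^ (-(2 * s))) := by
      rw [hg1, hgN1]
    exact hcount.trans (le_of_eq heq2)
  have hunn : (0 : ℝ) ≤ 1 / (2 * s) := by positivity
  have h_a := mul_le_mul_of_nonneg_left hSig hunn
  have h_b := mul_le_mul_of_nonneg_left hθm hunn
  have h_f : (1 / (2 * s)) * (2 * (c ^ (-(2 * s)) - q * c ^ (-(2 * s)))) =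
      2 * ((1 / (2 * s)) * c ^ (-(2 * s))) - 2 * ((1 / (2 * s)) * (q * c ^ (-(2 * s)))) := by
    ring
  have h_e : (1 / (2 * s)) * ((1 - 2 * s * (lam - 1)) * c ^ (-(2 * s))) =
      (1 / (2 * s)) * c ^ (-(2 * s)) - (lam - 1) * c ^ (-(2 * s)) := by
    field_simp
  have hA1qX : (1 / (2 * s)) * (q * c ^ (-(2 * s))) =
      ((N : ℝ) + 2) * ((lam - 1) * c ^ (-(2 * s))) := by
    rw [← hNq]
    field_simp
  have hθdiv : (1 / (2 * s)) * θ ^ (-(2 * s)) = θ ^ (-(2 * s)) / (2 * s) := by ring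
  linarith [hsumle, h_a, h_b, h_f, h_e, hA1qX, hθdiv, hcardmul]


set_option maxHeartbeats 1000000 in
/-- Lemma 3.2: away from the central pair, the particles stay at distance `≥ c`. -/
theorem other_particles_stay_separated
    (s γ : ℝ) (hs : s ∈ Set.Ioo (0:ℝ) 1) (hγ : 0 < γ)
    (σ : ℝ → ℝ → ℝ) (hσ : SigmaAssumption s σ)
    (N K : ℕ) (hK : 0 < K) (hKN : K < N)
    (x0 : ℕ → ℝ) (hx0 : ∀ i : ℕ, 1 ≤ i → i < N → x0 i < x0 (i + 1))
    (ζ : ℕ → ℝ) (hζ : Segregate ζ K N)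
    (x : ℕ → ℝ → ℝ) (Tc : ℝ) (hTc : 0 < Tc)
    (hx : IsODEFlowOn s γ N σ ζ 0 x0 x Tc)
    (hcoll : HasCollisionAt N x Tc) :
    ∃ c > (0:ℝ), ∀ t ∈ Set.Icc (0:ℝ) Tc, ∀ i : ℕ, 1 ≤ i → i < N → i ≠ K →
      c ≤ x (i + 1) t - x i t := by
  classical
  obtain ⟨hs0, hs1⟩ := hs
  have h2s : 0 < 2 * s := by linarith
  obtain ⟨B, hB⟩ := hσ.bdd
  have hB0 : 0 ≤ B := le_trans (abs_nonneg _) (hB 0 0 le_rfl)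
  by_cases hNI : ∃ i0 : ℕ, 1 ≤ i0 ∧ i0 < N ∧ i0 ≠ K
  case neg =>
    exact ⟨1, one_pos, fun t _ i h1 h2 h3 => absurd ⟨i, h1, h2, h3⟩ hNI⟩
  obtain ⟨iw, hiw⟩ := hNI
  set I : Finset ℕ := (Finset.Ico 1 N).erase K with hI
  have hImem : ∀ j : ℕ, j ∈ I ↔ (1 ≤ j ∧ j < N ∧ j ≠ K) := by
    intro j
    simp only [hI, Finset.mem_erase, Finset.mem_Ico]
    tauto
  have hIne : I.Nonempty := ⟨iw, (hImem iw).2 ⟨hiw.1, hiw.2.1, hiw.2.2⟩⟩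
  set m0 : ℝ := I.inf' hIne (fun j => x0 (j + 1) - x0 j) with hm0
  have hm0pos : 0 < m0 :=
    (Finset.lt_inf'_iff hIne).2 fun j hj =>
      sub_pos.2 (hx0 j ((hImem j).1 hj).1 ((hImem j).1 hj).2.1)
  set lam : ℝ := 1 + ((N : ℝ) + 1) ^ (-(2 * s)) / (2 * s * ((N : ℝ) + 2)) with hlamdef
  have hlam1 : 1 < lam := by
    rw [hlamdef]
    have h1 : 0 < ((N : ℝ) + 1) ^ (-(2 * s)) := Real.rpow_pos_of_pos (by positivity) _
    have h2 : 0 < 2 * s * ((N : ℝ) + 2) := by positivity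
    have := div_pos h1 h2
    linarith
  set c1 : ℝ := ((N : ℝ) + 1)⁻¹ * (2 * s * (2 * B + 1)) ^ (-(1 / (2 * s))) with hc1def
  have hc1pos : 0 < c1 := by
    rw [hc1def]
    have : 0 < (2 * s * (2 * B + 1) : ℝ) := by positivity
    have := Real.rpow_pos_of_pos this (-(1 / (2 * s)))
    positivity
  set c : ℝ := min m0 c1 / (lam + 1) with hcdef
  have hcpos : 0 < c := div_pos (lt_min hm0pos hc1pos) (by linarith)
  have hc_le_c1 : c ≤ c1 :=
    le_trans (div_le_self (le_of_lt (lt_min hm0pos hc1pos)) (by linarith)) (min_le_right _ _)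
  -- the key numeric bound coming from the choice of c1
  have hC0 : 2 * B + 1 ≤ (1 / (2 * s)) * (((N : ℝ) + 1) * c) ^ (-(2 * s)) := by
    have hNpos : (0 : ℝ) < (N : ℝ) + 1 := by positivity
    have hprod : ((N : ℝ) + 1) * c1 = (2 * s * (2 * B + 1)) ^ (-(1 / (2 * s))) := by
      rw [hc1def, ← mul_assoc, mul_inv_cancel₀ hNpos.ne', one_mul]
    have h1 : ((N : ℝ) + 1) * c ≤ (2 * s * (2 * B + 1)) ^ (-(1 / (2 * s))) := by
      rw [← hprod]
      exact mul_le_mul_of_nonneg_left hc_le_c1 hNpos.le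
    have hbpos : (0 : ℝ) < 2 * s * (2 * B + 1) := by positivity
    have hEq : ((2 * s * (2 * B + 1)) ^ (-(1 / (2 * s)))) ^ (-(2 * s)) = 2 * s * (2 * B + 1) := by
      rw [← Real.rpow_mul hbpos.le, show (-(1 / (2 * s))) * (-(2 * s)) = 1 by field_simp,
        Real.rpow_one]
    have h2 : 2 * s * (2 * B + 1) ≤ (((N : ℝ) + 1) * c) ^ (-(2 * s)) := by
      rw [← hEq]
      exact aux_rpow_anti h2s (by positivity) h1
    have h3 := mul_le_mul_of_nonneg_left h2 (show (0 : ℝ) ≤ 1 / (2 * s) by positivity)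
    have h4 : (1 / (2 * s)) * (2 * s * (2 * B + 1)) = 2 * B + 1 := by
      field_simp
    linarith
  have hζpm' : ∀ j : ℕ, 1 ≤ j → j ≤ N → ζ j = 1 ∨ ζ j = -1 := by
    intro j hj1 hjN
    by_cases h : j ≤ K
    · exact Or.inl (hζ.1 j hj1 h)
    · exact Or.inr (hζ.2 j (by omega) hjN)
  refine ⟨c, hcpos, ?_⟩
  intro t ht i hi1 hiN hiK
  by_contra hcon
  push_neg at hcon
  -- the "bad" set and its infimum
  set E : Set ℝ := {τ | τ ∈ Set.Icc (0:ℝ) Tc ∧ ∃ j ∈ I, x (j + 1) τ - x j τ < c} with hE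
  have hEne : E.Nonempty := ⟨t, ht, i, (hImem i).2 ⟨hi1, hiN, hiK⟩, hcon⟩
  have hEbdd : BddBelow E := ⟨0, fun τ hτ => hτ.1.1⟩
  set t1 : ℝ := sInf E with ht1
  have ht10 : 0 ≤ t1 := le_csInf hEne fun τ hτ => hτ.1.1
  have hEt : t ∈ E := ⟨ht, i, (hImem i).2 ⟨hi1, hiN, hiK⟩, hcon⟩
  have ht1Tc : t1 ≤ Tc := le_trans (csInf_le hEbdd hEt) ht.2
  have ht1mem : t1 ∈ Set.Icc (0:ℝ) Tc := ⟨ht10, ht1Tc⟩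
  have hbefore : ∀ τ ∈ Set.Icc (0:ℝ) Tc, τ < t1 → ∀ j ∈ I, c ≤ x (j + 1) τ - x j τ := by
    intro τ hτ hτ1 j hj
    by_contra hcc
    push_neg at hcc
    exact absurd (csInf_le hEbdd ⟨hτ, j, hj, hcc⟩) (not_le.2 hτ1)
  have hθcont : ∀ j ∈ I, ContinuousOn (fun τ => x (j + 1) τ - x j τ) (Set.Icc 0 Tc) := by
    intro j hj
    obtain ⟨hj1, hjN, -⟩ := (hImem j).1 hj
    exact (hx.cont (j + 1) (Finset.mem_Icc.2 ⟨by omega, by omega⟩)).sub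
      (hx.cont j (Finset.mem_Icc.2 ⟨hj1, by omega⟩))
  -- some gap is ≤ c at time t1
  have hstep3 : ∃ j ∈ I, x (j + 1) t1 - x j t1 ≤ c := by
    by_contra hno
    push_neg at hno
    have hev : ∀ᶠ τ in nhdsWithin t1 (Set.Icc (0:ℝ) Tc), ∀ j ∈ I, c < x (j + 1) τ - x j τ := by
      rw [Finset.eventually_all]
      intro j hj
      exact (hθcont j hj t1 ht1mem) (Ioi_mem_nhds (hno j hj))
    rw [eventually_nhdsWithin_iff, Metric.eventually_nhds_iff] at hev
    obtain ⟨ε, hε, hball⟩ := hev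
    obtain ⟨τ, hτE, hτlt⟩ : ∃ τ ∈ E, τ < t1 + ε := by
      by_contra hc2
      push_neg at hc2
      have : t1 + ε ≤ t1 := le_csInf hEne hc2
      linarith
    have ht1τ : t1 ≤ τ := csInf_le hEbdd hτE
    obtain ⟨hτIcc, j, hj, hjlt⟩ := hτE
    have hd : dist τ t1 < ε := by
      rw [Real.dist_eq, abs_of_nonneg (by linarith)]
      linarith
    exact absurd (hball hd hτIcc j hj) (not_lt.2 hjlt.le)
  obtain ⟨i', hi'I, hi'le⟩ := hstep3
  obtain ⟨hi'1, hi'N, hi'K⟩ := (hImem i').1 hi'I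
  have hmemN1 : i' + 1 ∈ Finset.Icc 1 N := Finset.mem_Icc.2 ⟨by omega, by omega⟩
  have hmemN2 : i' ∈ Finset.Icc 1 N := Finset.mem_Icc.2 ⟨hi'1, by omega⟩
  -- initial gap is large
  have hlamne : lam + 1 ≠ 0 := by positivity
  have hinit : (lam + 1) * c ≤ x (i' + 1) 0 - x i' 0 := by
    have h1 : m0 ≤ x0 (i' + 1) - x0 i' := Finset.inf'_le _ hi'I
    have h2 : (lam + 1) * c = min m0 c1 := by
      rw [hcdef, mul_comm, div_mul_cancel₀ _ hlamne]
    rw [hx.init (i' + 1) hmemN1, hx.init i' hmemN2, h2]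
    exact le_trans (min_le_left _ _) h1
  -- the last time the gap was ≥ lam * c
  set Aset : Set ℝ := {τ | τ ∈ Set.Icc 0 t1 ∧ lam * c ≤ x (i' + 1) τ - x i' τ} with hAdef
  have hA0 : (0:ℝ) ∈ Aset := ⟨⟨le_rfl, ht10⟩, by nlinarith⟩
  have hAne : Aset.Nonempty := ⟨0, hA0⟩
  have hAbdd : BddAbove Aset := ⟨t1, fun τ hτ => hτ.1.2⟩
  set a : ℝ := sSup Aset with hadef
  have ha0 : 0 ≤ a := le_csSup hAbdd hA0
  have hat1 : a ≤ t1 := csSup_le hAne fun τ hτ => hτ.1.2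
  have haTc : a ∈ Set.Icc (0:ℝ) Tc := ⟨ha0, le_trans hat1 ht1Tc⟩
  have hθa : lam * c ≤ x (i' + 1) a - x i' a := by
    have hclos : a ∈ closure Aset := csSup_mem_closure hAne hAbdd
    have hnb : (nhdsWithin a Aset).NeBot := mem_closure_iff_nhdsWithin_neBot.1 hclos
    have hsubA : Aset ⊆ Set.Icc (0:ℝ) Tc := fun τ hτ =>
      ⟨hτ.1.1, le_trans hτ.1.2 ht1Tc⟩
    have htend : Filter.Tendsto (fun τ => x (i' + 1) τ - x i' τ) (nhdsWithin a Aset)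
        (nhds (x (i' + 1) a - x i' a)) :=
      ((hθcont i' hi'I) a haTc).mono_left (nhdsWithin_mono a hsubA)
    exact ge_of_tendsto htend (Filter.eventually_of_mem self_mem_nhdsWithin fun τ hτ => hτ.2)
  have hlc : c < lam * c := by nlinarith
  have halt : a < t1 := by
    rcases lt_or_eq_of_le hat1 with h | h
    · exact h
    · rw [h] at hθa
      linarith
  have hmid : ∀ τ, a < τ → τ < t1 → x (i' + 1) τ - x i' τ ≤ lam * c := by
    intro τ h1 h2
    by_contra hcc
    push_neg at hcc
    have : τ ∈ Aset := ⟨⟨le_trans ha0 h1.le, h2.le⟩, hcc.le⟩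
    exact absurd (le_csSup hAbdd this) (not_le.2 h1)
  -- positivity of the derivative on (a, t1)
  have hderivpos : ∀ τ ∈ interior (Set.Icc a t1),
      0 < deriv (fun τ => x (i' + 1) τ - x i' τ) τ := by
    intro τ hτ
    rw [interior_Icc] at hτ
    obtain ⟨hτa, hτt1⟩ := hτ
    have hτ0 : 0 < τ := lt_of_le_of_lt ha0 hτa
    have hτTc : τ < Tc := lt_of_lt_of_le hτt1 ht1Tc
    have hD := (hx.derivEq (i' + 1) hmemN1 τ ⟨hτ0, hτTc⟩).sub
      (hx.derivEq i' hmemN2 τ ⟨hτ0, hτTc⟩)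
    rw [show (fun τ => x (i' + 1) τ - x i' τ) = x (i' + 1) - x i' from rfl, hD.deriv]
    simp only [odeRHS]
    rw [← mul_sub]
    apply mul_pos hγ
    have hτnn : (0:ℝ) ≤ τ := hτ0.le
    have habs : ∀ m : ℕ, 1 ≤ m → m ≤ N → |ζ m * σ τ (x m τ)| ≤ B := by
      intro m hm1 hmN
      rw [abs_mul]
      rcases hζpm' m hm1 hmN with h | h <;> rw [h] <;>
        simpa using hB τ (x m τ) hτnn
    have hb1 := habs (i' + 1) (by omega) (by omega)
    have hb2 := habs i' hi'1 (by omega)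
    have hord' : ∀ j : ℕ, 1 ≤ j → j < N → x j τ < x (j + 1) τ := fun j h1 h2 =>
      hx.sep j h1 h2 τ ⟨hτnn, hτTc⟩
    have hgap' : ∀ j : ℕ, 1 ≤ j → j < N → j ≠ K → c ≤ x (j + 1) τ - x j τ := by
      intro j h1 h2 h3
      exact hbefore τ ⟨hτnn, hτTc.le⟩ hτt1 j ((hImem j).2 ⟨h1, h2, h3⟩)
    have hθlam' : x (i' + 1) τ - x i' τ ≤ lam * c := hmid τ hτa hτt1
    have hcore := aux_sep_core s hs0 N K hK hKN ζ hζ (fun j => x j τ) c lam hcpos hlamdef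
      hord' hgap' i' hi'1 hi'N hi'K hθlam'
    linarith [hcore, hC0, le_abs_self (ζ (i' + 1) * σ τ (x (i' + 1) τ)),
      neg_abs_le (ζ i' * σ τ (x i' τ))]
  have hmono : StrictMonoOn (fun τ => x (i' + 1) τ - x i' τ) (Set.Icc a t1) :=
    strictMonoOn_of_deriv_pos (convex_Icc a t1)
      ((hθcont i' hi'I).mono (Set.Icc_subset_Icc ha0 ht1Tc)) hderivpos
  have hfinal := hmono (Set.left_mem_Icc.2 hat1) (Set.right_mem_Icc.2 hat1) halt
  simp only at hfinal
  linarith [hθa, hi'le, hlc, hfinal]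

end
end
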